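/- arXiv:2405.14836 — 4 statements merged into one kernel-verified Lean document; each statement's English description precedes it below -/
import Mathlib

section
/- Let (p_n) be a non-increasing sequence of non-negative reals with convergent sum such that p_i ≤ Σ_{j>i} p_j for all i. Then the set of partial sums {Σ_{n∈A} p_n : A ⊆ ℕ} equals the closed interval [0, Σ_n p_n]. -/
open Filter Topology

/-- Greedy partial sums: `gs p x n` is the sum of `p i` over those `i < n`
which were greedily selected to stay below `x`. -/
noncomputable def gs (p : ℕ → ℝ) (x : ℝ) : ℕ → ℝ
  | 0 => 0
  | n + 1 => gs p x n + if gs p x n + p n ≤ x then p n else 0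

/-- Kakeya's criterion, sufficiency: if a non-increasing non-negative summable
sequence satisfies `p i ≤ ∑_{j>i} p j` for all `i`, then the set of subset sums
equals `[0, ∑ p]`. -/
theorem kakeya_sufficiency (p : ℕ → ℝ)
    (hnn : ∀ n, 0 ≤ p n)
    (hmono : ∀ n, p (n + 1) ≤ p n)
    (hsum : Summable p)
    (hk : ∀ i, p i ≤ ∑' j : ℕ, p (i + 1 + j)) :
    {x : ℝ | ∃ A : Set ℕ, x = ∑' n : A, p n} = Set.Icc 0 (∑' n, p n) := by
  ext x
  simp only [Set.mem_setOf_eq, Set.mem_Icc]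
  constructor
  · rintro ⟨A, rfl⟩
    constructor
    · exact tsum_nonneg fun n => hnn n
    · exact Summable.tsum_subtype_le p A hnn hsum
  · rintro ⟨hx0, hxS⟩
    set s := gs p x with hs
    have hstep : ∀ n, s (n + 1) = s n + if s n + p n ≤ x then p n else 0 := fun n => rfl
    -- s n ≤ x
    have hle : ∀ n, s n ≤ x := by
      intro n
      induction n with
      | zero => exact hx0
      | succ n ih =>
        rw [hstep]
        split
        · next h => linarith
        · simpa using ih
    -- partial sums: s n = ∑ over selected indices < n
    set A : Set ℕ := {n | s n + p n ≤ x} with hA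
    have hind : ∀ n, ∑ i ∈ Finset.range n, Set.indicator A p i = s n := by
      intro n
      induction n with
      | zero => simp [hs, gs]
      | succ n ih =>
        rw [Finset.sum_range_succ, ih, hstep]
        by_cases h : s n + p n ≤ x
        · have hm : n ∈ A := h
          rw [Set.indicator_of_mem hm, if_pos h]
        · have hm : n ∉ A := h
          rw [Set.indicator_of_notMem hm, if_neg h]
    -- tail bound : x - s n ≤ ∑' j, p (n + j)
    have htail : ∀ n, x - s n ≤ ∑' j, p (n + j) := by
      intro n
      induction n with
      | zero =>
        simpa [hs, gs] using hxS
      | succ n ih =>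
        rw [hstep]
        by_cases h : s n + p n ≤ x
        · rw [if_pos h]
          have hsn : Summable fun j => p (n + j) :=
            ((summable_nat_add_iff n).2 hsum).congr fun j => by rw [Nat.add_comm]
          have heq : ∑' j, p (n + j) = p n + ∑' j, p (n + 1 + j) := by
            rw [Summable.tsum_eq_zero_add hsn]
            congr 1
            apply tsum_congr; intro j; congr 1; omega
          rw [heq] at ih
          linarith
        · rw [if_neg h]
          push_neg at h
          have h2 := hk n
          have heq : ∑' j : ℕ, p (n + 1 + j) = ∑' j, p (n + 1 + j) := rfl
          linarith [hk n]
    -- s is monotone and tends to x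
    have htend : Tendsto s atTop (𝓝 x) := by
      have h1 : Tendsto (fun n => ∑' j, p (n + j)) atTop (𝓝 0) := by
        have := tendsto_sum_nat_add p
        refine this.congr fun n => tsum_congr fun j => by rw [Nat.add_comm]
      have h2 : Tendsto (fun n => x - ∑' j, p (n + j)) atTop (𝓝 (x - 0)) :=
        tendsto_const_nhds.sub h1
      rw [sub_zero] at h2
      have h3 : Tendsto (fun _ : ℕ => x) atTop (𝓝 x) := tendsto_const_nhds
      exact tendsto_of_tendsto_of_tendsto_of_le_of_le h2 h3
        (fun n => by linarith [htail n]) hle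
    -- the indicator sums to x
    have hsummable : Summable (Set.indicator A p) :=
      hsum.indicator A
    have htend2 : Tendsto (fun n => ∑ i ∈ Finset.range n, Set.indicator A p i) atTop
        (𝓝 (∑' n, Set.indicator A p n)) := hsummable.hasSum.tendsto_sum_nat
    have : (∑' n, Set.indicator A p n) = x := by
      apply tendsto_nhds_unique htend2
      exact htend.congr fun n => (hind n).symm
    exact ⟨A, by rw [tsum_subtype A p, this]⟩
end

section
/- Let (p_n) be a non-increasing sequence of non-negative reals with convergent sum. If the set of partial sums {Σ_{n∈A} p_n : A ⊆ ℕ} equals [0, Σ_n p_n], then p_i ≤ Σ_{j>i} p_j for all i. -/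
/-- Kakeya's criterion, necessity: if the set of subset sums of a non-increasing
non-negative summable sequence equals `[0, ∑ p]`, then `p i ≤ ∑_{j>i} p j` for all `i`. -/
theorem kakeya_necessity (p : ℕ → ℝ)
    (hnn : ∀ n, 0 ≤ p n)
    (hmono : ∀ n, p (n + 1) ≤ p n)
    (hsum : Summable p)
    (hset : {x : ℝ | ∃ A : Set ℕ, x = ∑' n : A, p n} = Set.Icc 0 (∑' n, p n)) :
    ∀ i, p i ≤ ∑' j : ℕ, p (i + 1 + j) := by
  intro i
  by_contra h
  push_neg at h
  set T := ∑' j : ℕ, p (i + 1 + j) with hT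
  have hanti : Antitone p := antitone_nat_of_succ_le hmono
  have hT0 : 0 ≤ T := tsum_nonneg fun _ => hnn _
  have hpi_le : p i ≤ ∑' n, p n := Summable.le_tsum hsum i (fun j _ => hnn j)
  have hx : (T + p i) / 2 ∈ Set.Icc 0 (∑' n, p n) := by
    constructor
    · have := hnn i; linarith
    · linarith
  rw [← hset] at hx
  obtain ⟨A, hA⟩ := hx
  have hAsum : Summable (fun n : A => p n) := hsum.subtype A
  by_cases hcase : ∃ j ∈ A, j ≤ i
  · obtain ⟨j, hjA, hji⟩ := hcase
    have h1 : p j ≤ ∑' n : A, p n := Summable.le_tsum hAsum ⟨j, hjA⟩ (fun _ _ => hnn _)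
    have h2 : p i ≤ p j := hanti hji
    rw [← hA] at h1
    linarith
  · push_neg at hcase
    have hsub : A ⊆ Set.Ioi i := fun j hj => hcase j hj
    have key : ∑' n : Set.Ioi i, p n = T := by
      let e : ℕ ≃ Set.Ioi i :=
        { toFun := fun j => ⟨i + 1 + j, by simp [Set.mem_Ioi]; omega⟩
          invFun := fun n => n.1 - (i + 1)
          left_inv := fun j => by simp
          right_inv := fun n => by
            have := n.2
            simp only [Set.mem_Ioi] at this
            ext
            simp
            omega }
      rw [hT, ← e.tsum_eq (fun n : Set.Ioi i => p n)]; rfl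
    have hle : ∑' n : A, p n ≤ ∑' n : Set.Ioi i, p n := by
      rw [tsum_subtype, tsum_subtype]
      exact Summable.tsum_le_tsum
        (fun n => Set.indicator_le_indicator_of_subset hsub (fun m => hnn m) n)
        (hsum.indicator A) (hsum.indicator (Set.Ioi i))
    rw [key] at hle
    rw [← hA] at hle
    linarith
end

section
/- Let α_1,…,α_k and β_1,…,β_k be positive integers with α_i ≥ β_i for all i. Set α = Σ_i α_i and β = Σ_i β_i. Then ∏_{i=1}^k ∏_{j=0}^{β_i−1} (α_i − j) ≤ (α)_β / α^β · (∏_{j=β−k+1}^{β−1} α/(α−j)) · ∏_{i=1}^k α_i^{β_i}, where (α)_β = α(α−1)⋯(α−β+1) denotes the falling factorial. -/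
open Finset

/-- normalized falling factorial -/
noncomputable def ff (a p : ℕ) : ℝ := ∏ j ∈ Finset.range p, ((a : ℝ) - j) / a

lemma ff_nonneg {a p : ℕ} (h : p ≤ a) : 0 ≤ ff a p := by
  apply Finset.prod_nonneg
  intro j hj
  rw [Finset.mem_range] at hj
  have : (j : ℝ) ≤ a := by exact_mod_cast le_of_lt (lt_of_lt_of_le hj h)
  apply div_nonneg
  · linarith
  · positivity

lemma ff_mono {a p : ℕ} (b : ℕ) (ha : 0 < a) (h : p ≤ a) : ff a p ≤ ff (a + b) p := by
  apply Finset.prod_le_prod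
  · intro j hj
    rw [Finset.mem_range] at hj
    have : (j : ℝ) ≤ a := by exact_mod_cast le_of_lt (lt_of_lt_of_le hj h)
    apply div_nonneg
    · linarith
    · positivity
  · intro j hj
    have ha' : (0:ℝ) < a := by exact_mod_cast ha
    have hab : (0:ℝ) < (a:ℝ) + b := by positivity
    rw [div_le_div_iff₀ ha' (by push_cast; exact hab)]
    push_cast
    nlinarith [Nat.cast_nonneg (α := ℝ) j, Nat.cast_nonneg (α := ℝ) b]

lemma ff_mono' {a p : ℕ} (c : ℕ) (ha : 0 < a) (h : p ≤ a) : ff a p ≤ ff (a + c) p :=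
  ff_mono c ha h

lemma ff_one {c : ℕ} (hc : 0 < c) : ff c 1 = 1 := by
  have : ((c:ℝ)) ≠ 0 := by exact_mod_cast hc.ne'
  simp [ff, Finset.prod_range_one, div_self this]

lemma ff_peel {a b p0 q1 : ℕ}
    (H : ff a (p0 + 1) * ff b (q1 + 1) ≤ ff (a + b) (p0 + q1 + 1))
    (hcond : p0 * b ≤ (q1 + 1) * a)
    (hpa : p0 + 1 ≤ a) (hqb : q1 + 2 ≤ b) :
    ff a (p0 + 1) * ff b (q1 + 2) ≤ ff (a + b) (p0 + q1 + 2) := by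
  have hb : (0:ℝ) < b := by exact_mod_cast (show 0 < b by omega)
  have hab : (0:ℝ) < (a:ℝ) + b := by
    have : (0:ℝ) ≤ a := by positivity
    linarith
  have h1 : ff b (q1 + 2) = ff b (q1 + 1) * (((b:ℝ) - (q1 + 1)) / b) := by
    rw [show q1 + 2 = (q1 + 1) + 1 from rfl, ff, Finset.prod_range_succ, ← ff]
    push_cast; ring
  have h2 : ff (a + b) (p0 + q1 + 2) =
      ff (a + b) (p0 + q1 + 1) * ((((a:ℝ) + b) - (p0 + q1 + 1)) / ((a:ℝ) + b)) := by
    rw [show p0 + q1 + 2 = (p0 + q1 + 1) + 1 from rfl, ff, Finset.prod_range_succ, ← ff]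
    push_cast; ring
  rw [h1, h2, ← mul_assoc]
  have hfac : ((b:ℝ) - (q1 + 1)) / b ≤ (((a:ℝ) + b) - (p0 + q1 + 1)) / ((a:ℝ) + b) := by
    rw [div_le_div_iff₀ hb hab]
    have : (p0 : ℝ) * b ≤ ((q1:ℝ) + 1) * a := by exact_mod_cast hcond
    nlinarith
  have hfn : (0:ℝ) ≤ ((b:ℝ) - (q1 + 1)) / b := by
    apply div_nonneg _ (le_of_lt hb)
    have : ((q1:ℝ) + 2) ≤ b := by exact_mod_cast hqb
    linarith
  have hY : 0 ≤ ff (a + b) (p0 + q1 + 1) := ff_nonneg (by omega)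
  exact mul_le_mul H hfac hfn hY

lemma ff_key : ∀ n a b p0 q0, p0 + q0 ≤ n → p0 + 1 ≤ a → q0 + 1 ≤ b →
    ff a (p0 + 1) * ff b (q0 + 1) ≤ ff (a + b) (p0 + q0 + 1) := by
  intro n
  induction n with
  | zero =>
    intro a b p0 q0 hn hpa hqb
    obtain ⟨rfl, rfl⟩ : p0 = 0 ∧ q0 = 0 := by omega
    show ff a 1 * ff b 1 ≤ ff (a + b) 1
    rw [ff_one hpa, ff_one hqb, ff_one (by omega)]
    norm_num
  | succ n IH =>
    intro a b p0 q0 hn hpa hqb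
    match q0, p0 with
    | 0, p0 =>
      show ff a (p0 + 1) * ff b 1 ≤ ff (a + b) (p0 + 0 + 1)
      rw [ff_one hqb, mul_one]
      exact ff_mono' b (by omega) hpa
    | q0 + 1, 0 =>
      show ff a 1 * ff b (q0 + 1 + 1) ≤ ff (a + b) (0 + (q0 + 1) + 1)
      rw [ff_one hpa, one_mul]
      have := ff_mono' (a := b) a (by omega) hqb
      rw [add_comm b a] at this
      rw [show 0 + (q0 + 1) + 1 = q0 + 1 + 1 by omega]
      exact this
    | q1 + 1, p1 + 1 =>
      rcases le_total ((p1 + 1) * b) ((q1 + 1) * a) with hc | hc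
      · exact ff_peel (p0 := p1 + 1) (q1 := q1)
          (IH a b (p1 + 1) q1 (by omega) hpa (by omega)) hc hpa hqb
      · have H : ff b (q1 + 1 + 1) * ff a (p1 + 1) ≤ ff (b + a) (q1 + 1 + p1 + 1) := by
          rw [mul_comm, add_comm b a, show q1 + 1 + p1 + 1 = p1 + (q1 + 1) + 1 by ring]
          exact IH a b p1 (q1 + 1) (by omega) (by omega) hqb
        have := ff_peel (a := b) (b := a) (p0 := q1 + 1) (q1 := p1) H hc hqb hpa
        rw [mul_comm, add_comm b a, show q1 + 1 + p1 + 2 = p1 + 1 + (q1 + 1) + 1 by ring] at this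
        exact this

lemma ff_multi {ι : Type*} (A B : ι → ℕ) (s : Finset ι) (hs : s.Nonempty)
    (h1 : ∀ i ∈ s, 0 < B i) (h2 : ∀ i ∈ s, B i ≤ A i) :
    ∏ i ∈ s, ff (A i) (B i) ≤ ff (∑ i ∈ s, A i) (∑ i ∈ s, B i - s.card + 1) := by
  induction hs using Finset.Nonempty.cons_induction with
  | singleton a =>
    simp only [Finset.prod_singleton, Finset.sum_singleton, Finset.card_singleton]
    have hb := h1 a (Finset.mem_singleton_self a)
    rw [show B a - 1 + 1 = B a by omega]
  | cons a t ha ht IH =>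
    have h1t : ∀ i ∈ t, 0 < B i := fun i hi => h1 i (Finset.mem_cons_of_mem hi)
    have h2t : ∀ i ∈ t, B i ≤ A i := fun i hi => h2 i (Finset.mem_cons_of_mem hi)
    have IH' := IH h1t h2t
    have hba : 0 < B a := h1 a (Finset.mem_cons_self a t)
    have haa : B a ≤ A a := h2 a (Finset.mem_cons_self a t)
    have hct : 0 < t.card := Finset.card_pos.mpr ht
    have hcardsum : t.card ≤ ∑ i ∈ t, B i := by
      calc t.card = ∑ _i ∈ t, 1 := by simp
        _ ≤ ∑ i ∈ t, B i := Finset.sum_le_sum h1t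
    have hsumle : ∑ i ∈ t, B i ≤ ∑ i ∈ t, A i := Finset.sum_le_sum h2t
    rw [Finset.prod_cons, Finset.sum_cons, Finset.sum_cons, Finset.card_cons]
    calc ff (A a) (B a) * ∏ i ∈ t, ff (A i) (B i)
        ≤ ff (A a) (B a) * ff (∑ i ∈ t, A i) (∑ i ∈ t, B i - t.card + 1) := by
          apply mul_le_mul_of_nonneg_left IH' (ff_nonneg haa)
      _ ≤ ff (A a + ∑ i ∈ t, A i) ((B a - 1) + (∑ i ∈ t, B i - t.card) + 1) := by
          have := ff_key ((B a - 1) + (∑ i ∈ t, B i - t.card)) (A a) (∑ i ∈ t, A i)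
            (B a - 1) (∑ i ∈ t, B i - t.card) le_rfl (by omega) (by omega)
          rw [show B a - 1 + 1 = B a by omega] at this
          exact this
      _ = ff (A a + ∑ i ∈ t, A i) (B a + ∑ i ∈ t, B i - (t.card + 1) + 1) := by
          congr 1
          omega

lemma ff_eq_div (a p : ℕ) : ff a p = (∏ j ∈ Finset.range p, ((a:ℝ) - j)) / (a:ℝ) ^ p := by
  rw [ff, Finset.prod_div_distrib, Finset.prod_const, Finset.card_range]

/-- Products of falling factorials bounded via the aggregate falling factorial. -/
theorem prod_falling_factorial_le {k : ℕ} (hk : 0 < k)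
    (α β : Fin k → ℕ)
    (hα : ∀ i, 0 < α i) (hβ : ∀ i, 0 < β i) (hle : ∀ i, β i ≤ α i) :
    (∏ i, ∏ j ∈ Finset.range (β i), ((α i : ℝ) - j)) ≤
      (∏ j ∈ Finset.range (∑ i, β i), ((∑ i, α i : ℕ) - (j : ℝ))) /
          ((∑ i, α i : ℕ) : ℝ) ^ (∑ i, β i)
        * (∏ j ∈ Finset.Ico (∑ i, β i - k + 1) (∑ i, β i),
            ((∑ i, α i : ℕ) : ℝ) / ((∑ i, α i : ℕ) - (j : ℝ)))
        * ∏ i, ((α i : ℝ)) ^ (β i) := by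
  classical
  set A : ℕ := ∑ i, α i with hAdef
  set B : ℕ := ∑ i, β i with hBdef
  have huniv : (Finset.univ : Finset (Fin k)).Nonempty := ⟨⟨0, hk⟩, Finset.mem_univ _⟩
  have hA0 : 0 < A := Finset.sum_pos (fun i _ => hα i) huniv
  have hkB : k ≤ B := by
    calc k = ∑ _i : Fin k, 1 := by simp
      _ ≤ B := Finset.sum_le_sum (fun i _ => hβ i)
  have hBA : B ≤ A := Finset.sum_le_sum (fun i _ => hle i)
  set m : ℕ := B - k + 1 with hmdef
  have hm : m ≤ B := by omega
  have hAne : ((A:ℝ)) ≠ 0 := by exact_mod_cast hA0.ne'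
  -- split the range-B product
  have hsplit : (∏ j ∈ Finset.range B, ((A:ℝ) - j)) =
      (∏ j ∈ Finset.range m, ((A:ℝ) - j)) * (∏ j ∈ Finset.Ico m B, ((A:ℝ) - j)) := by
    rw [Finset.range_eq_Ico, Finset.range_eq_Ico]
    exact (Finset.prod_Ico_consecutive (fun j => ((A:ℝ) - j)) (Nat.zero_le m) hm).symm
  have hP2pos : ∀ j ∈ Finset.Ico m B, (0:ℝ) < (A:ℝ) - j := by
    intro j hj
    rw [Finset.mem_Ico] at hj
    have : (j:ℝ) < A := by exact_mod_cast lt_of_lt_of_le hj.2 hBA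
    linarith
  have hP2ne : (∏ j ∈ Finset.Ico m B, ((A:ℝ) - j)) ≠ 0 :=
    ne_of_gt (Finset.prod_pos hP2pos)
  have hIco : (∏ j ∈ Finset.Ico m B, ((A:ℝ) / ((A:ℝ) - j))) =
      (A:ℝ) ^ (k - 1) / (∏ j ∈ Finset.Ico m B, ((A:ℝ) - j)) := by
    rw [Finset.prod_div_distrib, Finset.prod_const, Nat.card_Ico,
      show B - m = k - 1 by omega]
  have hpow : ((A:ℝ)) ^ B = (A:ℝ) ^ m * (A:ℝ) ^ (k - 1) := by
    rw [← pow_add, show m + (k - 1) = B by omega]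
  have hRHS : (∏ j ∈ Finset.range B, ((A:ℝ) - j)) / (A:ℝ) ^ B
      * (∏ j ∈ Finset.Ico m B, ((A:ℝ) / ((A:ℝ) - j))) = ff A m := by
    rw [hsplit, hIco, hpow, ff_eq_div]
    field_simp
  rw [hRHS]
  -- rewrite the LHS
  have hLHS : (∏ i, ∏ j ∈ Finset.range (β i), ((α i : ℝ) - j)) =
      (∏ i, ff (α i) (β i)) * ∏ i, ((α i : ℝ)) ^ (β i) := by
    rw [← Finset.prod_mul_distrib]
    apply Finset.prod_congr rfl
    intro i _
    rw [ff_eq_div, div_mul_cancel₀]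
    have : ((α i : ℝ)) ≠ 0 := by exact_mod_cast (hα i).ne'
    positivity
  rw [hLHS]
  apply mul_le_mul_of_nonneg_right _ (Finset.prod_nonneg fun i _ => by positivity)
  have := ff_multi α β Finset.univ huniv (fun i _ => hβ i) (fun i _ => hle i)
  rw [Finset.card_univ, Fintype.card_fin] at this
  exact this
end

section
/- Let α_1,…,α_k, β_1,…,β_k be positive integers with α_i ≥ β_i for all i, and set α = Σ α_i, β = Σ β_i. Then ∏_{i=1}^k ∏_{j=0}^{β_i−1} α_i/(α_i − j) ≥ ∏_{j=0}^{β−k} α/(α − j). -/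
open Finset

lemma aux_ffge (k : ℕ) (hk : 0 < k) (α : Fin k → ℕ) (hα : ∀ i, 0 < α i) :
    ∀ n (β : Fin k → ℕ), (∀ i, 0 < β i) → (∀ i, β i ≤ α i) → (∑ i, β i = k + n) →
    (∏ j ∈ Finset.range (n + 1), ((∑ i, α i : ℕ) : ℝ) / ((∑ i, α i : ℕ) - (j : ℝ))) ≤
      ∏ i, ∏ j ∈ Finset.range (β i), ((α i : ℝ) / ((α i : ℝ) - j)) := by
  haveI : Nonempty (Fin k) := ⟨⟨0, hk⟩⟩
  intro n
  induction n with
  | zero =>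
    intro β hβ hle hsum
    have hβ1 : ∀ i, β i = 1 := by
      intro i
      by_contra h
      have h2 : 2 ≤ β i := by have := hβ i; omega
      have : k + 1 ≤ ∑ l, β l := by
        have := Finset.add_sum_erase univ β (mem_univ i)
        have hsub : (k - 1 : ℕ) ≤ ∑ l ∈ univ.erase i, β l := by
          calc (k - 1 : ℕ) = ∑ _l ∈ univ.erase i, 1 := by
                simp [Finset.card_erase_of_mem]
            _ ≤ ∑ l ∈ univ.erase i, β l := Finset.sum_le_sum fun l _ => hβ l
        omega
      omega
    have hA : (0:ℝ) < ((∑ i, α i : ℕ) : ℝ) := by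
      have : 0 < ∑ i, α i := Finset.sum_pos (fun i _ => hα i) univ_nonempty
      exact_mod_cast this
    have hαpos : ∀ l, (0:ℝ) < (α l : ℝ) := fun l => by exact_mod_cast hα l
    simp only [hβ1, Finset.prod_range_one, Nat.cast_zero, sub_zero, Nat.zero_add]
    rw [div_self (ne_of_gt hA), Finset.prod_congr rfl (fun l _ => div_self (ne_of_gt (hαpos l)))]
    simp
  | succ n ih =>
    intro β hβ hle hsum
    have hA : (0:ℝ) < ((∑ i, α i : ℕ) : ℝ) := by
      have : 0 < ∑ i, α i := Finset.sum_pos (fun i _ => hα i) univ_nonempty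
      exact_mod_cast this
    obtain ⟨i, -, hmax⟩ := Finset.exists_max_image univ
      (fun l => ((β l : ℝ) - 1) / (α l : ℝ)) univ_nonempty
    have hαpos : ∀ l, (0:ℝ) < (α l : ℝ) := fun l => by exact_mod_cast hα l
    have hge2 : 2 ≤ β i := by
      by_contra h
      have hβi : β i = 1 := by have := hβ i; omega
      have hall : ∀ l, β l = 1 := by
        intro l
        have h1 := hmax l (mem_univ l)
        rw [hβi] at h1
        simp only [Nat.cast_one, sub_self, zero_div] at h1
        have h2 : (β l : ℝ) - 1 ≤ 0 := by
          by_contra h3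
          push_neg at h3
          exact absurd h1 (not_le.mpr (div_pos h3 (hαpos l)))
        have : (β l : ℝ) ≤ 1 := by linarith
        have : β l ≤ 1 := by exact_mod_cast this
        have := hβ l; omega
      have : ∑ l, β l = k := by
        simp [hall]
      omega
    obtain ⟨m, hm⟩ : ∃ m, β i = m + 1 := ⟨β i - 1, by omega⟩
    have hm1 : 1 ≤ m := by omega
    -- β' with β' i = m
    set β' : Fin k → ℕ := Function.update β i m with hβ'def
    have hβ'i : β' i = m := Function.update_self i m β
    have hβ'ne : ∀ l, l ≠ i → β' l = β l := fun l hl => Function.update_of_ne hl m β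
    have hβ'pos : ∀ l, 0 < β' l := by
      intro l
      by_cases hl : l = i
      · subst hl; rw [hβ'i]; omega
      · rw [hβ'ne l hl]; exact hβ l
    have hβ'le : ∀ l, β' l ≤ α l := by
      intro l
      by_cases hl : l = i
      · subst hl; rw [hβ'i]; have := hle l; omega
      · rw [hβ'ne l hl]; exact hle l
    have hsum' : ∑ l, β' l = k + n := by
      have h1 := Finset.add_sum_erase univ β (mem_univ i)
      have h2 := Finset.add_sum_erase univ β' (mem_univ i)
      have h3 : ∑ l ∈ univ.erase i, β' l = ∑ l ∈ univ.erase i, β l :=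
        Finset.sum_congr rfl fun l hl => hβ'ne l (Finset.ne_of_mem_erase hl)
      rw [hβ'i, h3] at h2
      omega
    have IH := ih β' hβ'pos hβ'le hsum'
    -- the key factor inequality
    have hsumcast : ((∑ l, β l : ℕ) : ℝ) = k + n + 1 := by exact_mod_cast congrArg (Nat.cast : ℕ → ℝ) hsum
    have hsumR : ∑ l, ((β l : ℝ) - 1) = n + 1 := by
      have hc : ∑ _l : Fin k, (1:ℝ) = k := by simp
      rw [Finset.sum_sub_distrib, hc]
      push_cast at hsumcast
      linarith
    have hAge : (n + 1 : ℝ) + 1 ≤ ((∑ l, α l : ℕ) : ℝ) := by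
      have hβα : (∑ l, β l : ℕ) ≤ ∑ l, α l := Finset.sum_le_sum fun l _ => hle l
      have h2 : k + n + 1 ≤ ∑ l, α l := by omega
      have h3 := (Nat.cast_le (α := ℝ)).mpr h2
      push_cast at h3 ⊢
      have hk1 : (1:ℝ) ≤ (k:ℝ) := by exact_mod_cast hk
      linarith
    have hkey : ((n:ℝ) + 1) * (α i : ℝ) ≤ ((β i : ℝ) - 1) * ((∑ l, α l : ℕ) : ℝ) := by
      have hterm : ∀ l, ((β l : ℝ) - 1) * (α i : ℝ) ≤ ((β i : ℝ) - 1) * (α l : ℝ) := by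
        intro l
        have h1 := hmax l (mem_univ l)
        rw [div_le_div_iff₀ (hαpos l) (hαpos i)] at h1
        exact h1
      calc ((n:ℝ) + 1) * (α i : ℝ) = (∑ l, ((β l : ℝ) - 1)) * (α i : ℝ) := by rw [hsumR]
        _ = ∑ l, ((β l : ℝ) - 1) * (α i : ℝ) := by rw [Finset.sum_mul]
        _ ≤ ∑ l, ((β i : ℝ) - 1) * (α l : ℝ) := Finset.sum_le_sum fun l _ => hterm l
        _ = ((β i : ℝ) - 1) * ∑ l, (α l : ℝ) := by rw [Finset.mul_sum]
        _ = ((β i : ℝ) - 1) * ((∑ l, α l : ℕ) : ℝ) := by push_cast; ring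
      
    have hden1 : (0:ℝ) < ((∑ l, α l : ℕ) : ℝ) - (n + 1) := by linarith
    have hden2 : (0:ℝ) < (α i : ℝ) - (m : ℝ) := by
      have : m + 1 ≤ α i := by have := hle i; omega
      have := (Nat.cast_le (α := ℝ)).mpr this
      push_cast at this; linarith
    have hmcast : (m : ℝ) = (β i : ℝ) - 1 := by
      rw [hm]; push_cast; ring
    have hfac : ((∑ l, α l : ℕ) : ℝ) / (((∑ l, α l : ℕ) : ℝ) - (n + 1)) ≤
        (α i : ℝ) / ((α i : ℝ) - (m : ℝ)) := by
      rw [div_le_div_iff₀ hden1 hden2]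
      rw [hmcast]
      nlinarith [hkey]
    -- decompose RHS
    have hRHS : (∏ l, ∏ j ∈ Finset.range (β l), ((α l : ℝ) / ((α l : ℝ) - j))) =
        (∏ l, ∏ j ∈ Finset.range (β' l), ((α l : ℝ) / ((α l : ℝ) - j))) *
          ((α i : ℝ) / ((α i : ℝ) - (m : ℝ))) := by
      rw [← Finset.mul_prod_erase univ _ (mem_univ i),
          ← Finset.mul_prod_erase univ (fun l => ∏ j ∈ Finset.range (β' l), ((α l : ℝ) / ((α l : ℝ) - j))) (mem_univ i)]
      have h3 : ∏ l ∈ univ.erase i, ∏ j ∈ Finset.range (β' l), ((α l : ℝ) / ((α l : ℝ) - j))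
          = ∏ l ∈ univ.erase i, ∏ j ∈ Finset.range (β l), ((α l : ℝ) / ((α l : ℝ) - j)) :=
        Finset.prod_congr rfl fun l hl => by rw [hβ'ne l (Finset.ne_of_mem_erase hl)]
      rw [h3, hβ'i, hm, Finset.prod_range_succ]
      ring
    -- decompose LHS
    have hLHS : (∏ j ∈ Finset.range (n + 1 + 1), ((∑ l, α l : ℕ) : ℝ) / (((∑ l, α l : ℕ) : ℝ) - (j:ℝ))) =
        (∏ j ∈ Finset.range (n + 1), ((∑ l, α l : ℕ) : ℝ) / (((∑ l, α l : ℕ) : ℝ) - (j:ℝ))) *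
          (((∑ l, α l : ℕ) : ℝ) / (((∑ l, α l : ℕ) : ℝ) - (n + 1))) := by
      rw [Finset.prod_range_succ]
      push_cast
      ring
    rw [hLHS, hRHS]
    have hLnonneg : (0:ℝ) ≤ ∏ j ∈ Finset.range (n + 1), ((∑ l, α l : ℕ) : ℝ) / (((∑ l, α l : ℕ) : ℝ) - (j:ℝ)) := by
      apply Finset.prod_nonneg
      intro j hj
      have hj' : (j:ℝ) ≤ n := by
        have := Finset.mem_range.mp hj
        have : j ≤ n := by omega
        exact_mod_cast this
      have : (0:ℝ) < ((∑ l, α l : ℕ) : ℝ) - j := by linarith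
      positivity
    have hfacpos : (0:ℝ) ≤ ((∑ l, α l : ℕ) : ℝ) / (((∑ l, α l : ℕ) : ℝ) - (n + 1)) :=
      le_of_lt (div_pos hA hden1)
    exact mul_le_mul IH hfac hfacpos (le_trans hLnonneg IH)

/-- Multiplicative rearrangement inequality for ratios of falling factorials. -/
theorem prod_ratio_falling_factorial_ge {k : ℕ} (hk : 0 < k)
    (α β : Fin k → ℕ)
    (hα : ∀ i, 0 < α i) (hβ : ∀ i, 0 < β i) (hle : ∀ i, β i ≤ α i) :
    (∏ j ∈ Finset.range (∑ i, β i - k + 1),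
        ((∑ i, α i : ℕ) : ℝ) / ((∑ i, α i : ℕ) - (j : ℝ))) ≤
      ∏ i, ∏ j ∈ Finset.range (β i), ((α i : ℝ) / ((α i : ℝ) - j)) := by
  have hkle : k ≤ ∑ i, β i := by
    calc k = ∑ _i : Fin k, 1 := by simp
      _ ≤ ∑ i, β i := Finset.sum_le_sum fun i _ => hβ i
  have hn : ∑ i, β i = k + (∑ i, β i - k) := by omega
  have h1 : ∑ i, β i - k + 1 = (∑ i, β i - k) + 1 := rfl
  rw [h1]
  exact aux_ffge k hk α hα (∑ i, β i - k) β hβ hle hn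
end
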